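/- Let G be an abelian group, Γ(G,g) the G-grading on B(4,2) induced from the ℤ-grading (deg e₁ = deg e₂ = 0, deg u = g, deg v = −g, deg x = 2g, deg y = −2g) by 1 ↦ g. Then every G-grading on B(4,2) equals Γ(G,g) for some g and symplectic basis {u,v}, and Γ(G,g) ≅ Γ(G,h) if and only if g = h or g = −h. -/

import Mathlib

/-- The `G`-grading `Γ(G,g)` on `B(4,2)`: `deg e₁ = deg e₂ = 0`, `deg u = g`, `deg v = −g`,
`deg x = 2g`, `deg y = −2g`. -/
def GammaB42 {F S G : Type*} [Field F] [AddCommGroup S] [Module F S] [AddCommGroup G]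
    [DecidableEq G] (e₁ e₂ x y u v : S) (g : G) : G → Submodule F S := fun h =>
  (if h = 0 then Submodule.span F {e₁, e₂} else ⊥) ⊔
  (if h = g then Submodule.span F {u} else ⊥) ⊔
  (if h = -g then Submodule.span F {v} else ⊥) ⊔
  (if h = g + g then Submodule.span F {x} else ⊥) ⊔
  (if h = -(g + g) then Submodule.span F {y} else ⊥)

lemma aux_grading_eq {F S G : Type*} [Field F] [AddCommGroup S] [Module F S]
    (γ δ : G → Submodule F S) (hind : iSupIndep γ) (hle : ∀ i, δ i ≤ γ i)
    (htop : ⨆ i, δ i = ⊤) (i : G) : γ i = δ i := by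
  refine le_antisymm ?_ (hle i)
  have hsplit : (⊤ : Submodule F S) = δ i ⊔ ⨆ j, ⨆ _ : j ≠ i, δ j := by
    rw [← htop, iSup_split δ (· = i)]
    congr 1
    exact (iSup_iSup_eq_left (b := i) (f := fun j _ => δ j)).symm ▸ rfl
  have h3 : (δ i ⊔ ⨆ j, ⨆ _ : j ≠ i, δ j) ⊓ γ i = δ i ⊔ ((⨆ j, ⨆ _ : j ≠ i, δ j) ⊓ γ i) :=
    sup_inf_assoc_of_le _ (hle i)
  have h4 : (⨆ j, ⨆ _ : j ≠ i, δ j) ⊓ γ i = ⊥ := by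
    have hXle : (⨆ j, ⨆ _ : j ≠ i, δ j) ≤ ⨆ j, ⨆ _ : j ≠ i, γ j :=
      iSup_mono fun j => iSup_mono fun _ => hle j
    exact disjoint_iff.mp (((hind i).symm).mono_left hXle)
  calc γ i = (⊤ : Submodule F S) ⊓ γ i := (top_inf_eq _).symm
    _ = (δ i ⊔ ⨆ j, ⨆ _ : j ≠ i, δ j) ⊓ γ i := by rw [← hsplit]
    _ = δ i ⊔ ((⨆ j, ⨆ _ : j ≠ i, δ j) ⊓ γ i) := h3
    _ = δ i := by rw [h4, sup_bot_eq]
    _ ≤ δ i := le_rfl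

/-- every `G`-grading on `B(4,2)` (with `G` abelian) equals `Γ(G,g)` for some
`g ∈ G` and some symplectic basis `{u',v'}` of `V`, and `Γ(G,g) ≅ Γ(G,h)` iff `g = h` or
`g = −h`. `B(4,2)` is presented by its multiplication table with respect to the matrix
units `e₁,e₂,x,y` of `End_F(V)` and a symplectic basis `{u,v}` of `V`. -/
theorem B42_gradings_up_to_isomorphism {F S G : Type*} [Field F] [AddCommGroup S]
    [Module F S] [AddCommGroup G] [DecidableEq G]
    (hchar : ringChar F = 3)
    (mul : S →ₗ[F] S →ₗ[F] S) (e₁ e₂ x y u v : S)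
    (hbasis : LinearIndependent F ![e₁, e₂, x, y, u, v])
    (hspan : Submodule.span F {e₁, e₂, x, y, u, v} = ⊤)
    (h_ee : mul e₁ e₁ = e₁ ∧ mul e₁ e₂ = 0 ∧ mul e₁ x = x ∧ mul e₁ y = 0 ∧
      mul e₂ e₁ = 0 ∧ mul e₂ e₂ = e₂ ∧ mul e₂ x = 0 ∧ mul e₂ y = y ∧
      mul x e₁ = 0 ∧ mul x e₂ = x ∧ mul x x = 0 ∧ mul x y = e₁ ∧
      mul y e₁ = y ∧ mul y e₂ = 0 ∧ mul y x = e₂ ∧ mul y y = 0)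
    (h_eo : mul e₁ u = 0 ∧ mul e₁ v = v ∧ mul e₂ u = u ∧ mul e₂ v = 0 ∧
      mul x u = 0 ∧ mul x v = -u ∧ mul y u = -v ∧ mul y v = 0)
    (h_oe : mul u e₁ = u ∧ mul u e₂ = 0 ∧ mul u x = 0 ∧ mul u y = v ∧
      mul v e₁ = 0 ∧ mul v e₂ = v ∧ mul v x = u ∧ mul v y = 0)
    (h_oo : mul u u = -x ∧ mul u v = -e₂ ∧ mul v u = e₁ ∧ mul v v = y) :
    (∀ γ : G → Submodule F S, DirectSum.IsInternal γ →
      (∀ g h : G, ∀ a ∈ γ g, ∀ c ∈ γ h, mul a c ∈ γ (g + h)) →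
      (∀ g : G, γ g =
        (γ g ⊓ Submodule.span F {e₁, e₂, x, y}) ⊔ (γ g ⊓ Submodule.span F {u, v})) →
      ∃ (g : G) (u' v' : S), u' ∈ Submodule.span F ({u, v} : Set S) ∧
        v' ∈ Submodule.span F ({u, v} : Set S) ∧
        Submodule.span F {u', v'} = Submodule.span F ({u, v} : Set S) ∧
        mul u' (mul v' u') = u' ∧
        ∀ h : G, γ h =
          GammaB42 (mul v' u') (-(mul u' v')) (-(mul u' u')) (mul v' v') u' v' g h) ∧
    (∀ g h : G,
      (∃ φ : S ≃ₗ[F] S,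
        (∀ a c : S, φ (mul a c) = mul (φ a) (φ c)) ∧
        Submodule.map (φ : S →ₗ[F] S) (Submodule.span F {e₁, e₂, x, y}) =
          Submodule.span F {e₁, e₂, x, y} ∧
        Submodule.map (φ : S →ₗ[F] S) (Submodule.span F {u, v}) = Submodule.span F {u, v} ∧
        ∀ k : G, Submodule.map (φ : S →ₗ[F] S) (GammaB42 e₁ e₂ x y u v g k) =
          GammaB42 e₁ e₂ x y u v h k)
      ↔ (g = h ∨ g = -h)) := by
  obtain ⟨p1,p2,p3,p4,p5,p6,p7,p8,p9,p10,p11,p12,p13,p14,p15,p16⟩ := h_ee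
  obtain ⟨q1,q2,q3,q4,q5,q6,q7,q8⟩ := h_eo
  obtain ⟨r1,r2,r3,r4,r5,r6,r7,r8⟩ := h_oe
  obtain ⟨s1,s2,s3,s4⟩ := h_oo
  have hu0 : u ≠ 0 := hbasis.ne_zero 4
  have huV : u ∈ Submodule.span F ({u, v} : Set S) := Submodule.subset_span (by simp)
  have hvV : v ∈ Submodule.span F ({u, v} : Set S) := Submodule.subset_span (by simp)
  have himg1 : (![e₁, e₂, x, y, u, v]) '' ({0, 1, 2, 3} : Set (Fin 6)) = {e₁, e₂, x, y} := by
    simp [Set.image_insert_eq]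
  have himg2 : (![e₁, e₂, x, y, u, v]) '' ({4, 5} : Set (Fin 6)) = {u, v} := by
    rw [Set.image_insert_eq, Set.image_singleton]
    rfl
  have hdisjset : Disjoint ({0, 1, 2, 3} : Set (Fin 6)) ({4, 5} : Set (Fin 6)) := by
    rw [Set.disjoint_left]
    rintro a (rfl | rfl | rfl | rfl) <;> simp
  have hdisjBV : Disjoint (Submodule.span F ({e₁, e₂, x, y} : Set S))
      (Submodule.span F ({u, v} : Set S)) := by
    have := hbasis.disjoint_span_image hdisjset
    rwa [himg1, himg2] at this
  have key : ∀ a b c d : F, mul (a•u+b•v) (mul (c•u+d•v) (a•u+b•v)) = (a*d-b*c) • (a•u+b•v) := by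
    intro a b c d
    simp only [map_add, map_smul, LinearMap.add_apply, LinearMap.smul_apply,
      q1,q2,q3,q4,q5,q6,q7,q8,r1,r2,r3,r4,r5,r6,r7,r8,s1,s2,s3,s4,
      map_neg, map_zero, smul_neg, smul_zero, smul_smul, sub_smul]
    module
  constructor
  · -- Part 1: classification of gradings
    intro γ hint hmul hsplit
    have hind : iSupIndep γ := hint.submodule_iSupIndep
    have hsuptop : ⨆ i, γ i = ⊤ := hint.submodule_iSup_eq_top
    have huniq : ∀ (s : S) (i j : G), s ≠ 0 → s ∈ γ i → s ∈ γ j → i = j := by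
      intro s i j hs hi hj
      by_contra hne
      exact hs (Submodule.disjoint_def.mp (hind.pairwiseDisjoint hne) s hi hj)
    have hVle : Submodule.span F ({u, v} : Set S) ≤
        ⨆ k, (γ k ⊓ Submodule.span F ({u, v} : Set S)) := by
      have htop2 : (⨆ k, (γ k ⊓ Submodule.span F ({e₁, e₂, x, y} : Set S))) ⊔
          (⨆ k, (γ k ⊓ Submodule.span F ({u, v} : Set S))) = ⊤ := by
        rw [← iSup_sup_eq, ← hsuptop]
        exact iSup_congr fun k => (hsplit k).symm
      have hQ : (⨆ k, (γ k ⊓ Submodule.span F ({u, v} : Set S))) ≤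
          Submodule.span F ({u, v} : Set S) := iSup_le fun k => inf_le_right
      have hP : (⨆ k, (γ k ⊓ Submodule.span F ({e₁, e₂, x, y} : Set S))) ≤
          Submodule.span F ({e₁, e₂, x, y} : Set S) := iSup_le fun k => inf_le_right
      have e1 : Submodule.span F ({u, v} : Set S) =
          ((⨆ k, (γ k ⊓ Submodule.span F ({u, v} : Set S))) ⊔
            (⨆ k, (γ k ⊓ Submodule.span F ({e₁, e₂, x, y} : Set S)))) ⊓
            Submodule.span F ({u, v} : Set S) := by
        rw [sup_comm, htop2, top_inf_eq]
      have e2 := sup_inf_assoc_of_le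
        (x := ⨆ k, (γ k ⊓ Submodule.span F ({u, v} : Set S)))
        (⨆ k, (γ k ⊓ Submodule.span F ({e₁, e₂, x, y} : Set S))) hQ
      have e3 : (⨆ k, (γ k ⊓ Submodule.span F ({e₁, e₂, x, y} : Set S))) ⊓
          Submodule.span F ({u, v} : Set S) = ⊥ :=
        le_bot_iff.mp (le_trans (inf_le_inf_right _ hP) hdisjBV.le_bot)
      refine le_of_eq ?_
      calc Submodule.span F ({u, v} : Set S)
          = ((⨆ k, (γ k ⊓ Submodule.span F ({u, v} : Set S))) ⊔
            (⨆ k, (γ k ⊓ Submodule.span F ({e₁, e₂, x, y} : Set S)))) ⊓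
            Submodule.span F ({u, v} : Set S) := e1
        _ = (⨆ k, (γ k ⊓ Submodule.span F ({u, v} : Set S))) ⊔
            ((⨆ k, (γ k ⊓ Submodule.span F ({e₁, e₂, x, y} : Set S))) ⊓
            Submodule.span F ({u, v} : Set S)) := e2
        _ = (⨆ k, (γ k ⊓ Submodule.span F ({u, v} : Set S))) ⊔ ⊥ := by rw [e3]
        _ = ⨆ k, (γ k ⊓ Submodule.span F ({u, v} : Set S)) := sup_bot_eq _
    have step : ∃ (g0 b0 : G) (u' v' : S), u' ∈ Submodule.span F ({u, v} : Set S) ∧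
        v' ∈ Submodule.span F ({u, v} : Set S) ∧ u' ∈ γ g0 ∧ v' ∈ γ b0 ∧
        u' ≠ 0 ∧ Submodule.span F {u', v'} = Submodule.span F ({u, v} : Set S) ∧
        mul u' (mul v' u') = u' := by
      have huQ : u ∈ ⨆ k, (γ k ⊓ Submodule.span F ({u, v} : Set S)) := hVle huV
      rw [Submodule.mem_iSup_iff_exists_finsupp] at huQ
      obtain ⟨f, hf, hfs⟩ := huQ
      have hex : ∃ a0, f a0 ≠ 0 := by
        by_contra hh; push_neg at hh
        have hf0 : f = 0 := Finsupp.ext fun a => hh a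
        rw [hf0, Finsupp.sum_zero_index] at hfs
        exact hu0 hfs.symm
      obtain ⟨a0, hfa⟩ := hex
      have hw0γ : f a0 ∈ γ a0 := (hf a0).1
      have hw0V : f a0 ∈ Submodule.span F ({u, v} : Set S) := (hf a0).2
      by_cases hc : Submodule.span F ({u, v} : Set S) ≤ γ a0
      · refine ⟨a0, a0, u, v, huV, hvV, hc huV, hc hvV, hu0, rfl, ?_⟩
        rw [s3, r1]
      · rw [SetLike.not_le_iff_exists] at hc
        obtain ⟨s, hsV, hsna⟩ := hc
        have hsQ := hVle hsV
        rw [Submodule.mem_iSup_iff_exists_finsupp] at hsQ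
        obtain ⟨f', hf', hfs'⟩ := hsQ
        have hexb : ∃ b0, b0 ≠ a0 ∧ f' b0 ≠ 0 := by
          by_contra hh; push_neg at hh
          apply hsna
          rw [← hfs']
          apply Submodule.finsuppSum_mem
          intro c hc0
          by_cases hca : c = a0
          · exact hca ▸ (hf' c).1
          · exact absurd (hh c hca) hc0
        obtain ⟨b0, hba, hfb⟩ := hexb
        have hw1γ : f' b0 ∈ γ b0 := (hf' b0).1
        have hw1V : f' b0 ∈ Submodule.span F ({u, v} : Set S) := (hf' b0).2
        obtain ⟨α, β, hαβ⟩ := Submodule.mem_span_pair.mp hw0V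
        obtain ⟨c, d, hcd⟩ := Submodule.mem_span_pair.mp hw1V
        have E1 : d • f a0 - β • f' b0 = (α*d - β*c) • u := by
          rw [← hαβ, ← hcd]; module
        have E2 : α • f' b0 - c • f a0 = (α*d - β*c) • v := by
          rw [← hαβ, ← hcd]; module
        have hdisj2 : ∀ t : S, t ∈ γ a0 → t ∈ γ b0 → t = 0 := by
          intro t ht1 ht2
          by_contra ht
          exact hba (huniq t b0 a0 ht ht2 ht1)
        have hlam : α * d - β * c ≠ 0 := by
          intro h0
          have e1' := E1
          have e2' := E2
          rw [h0, zero_smul, sub_eq_zero] at e1'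
          rw [h0, zero_smul, sub_eq_zero] at e2'
          have t1 : d • f a0 = 0 := by
            refine hdisj2 _ (Submodule.smul_mem _ _ hw0γ) ?_
            rw [e1']; exact Submodule.smul_mem _ _ hw1γ
          have t2 : c • f a0 = 0 := by
            refine hdisj2 _ (Submodule.smul_mem _ _ hw0γ) ?_
            rw [show c • f a0 = α • f' b0 from e2'.symm]
            exact Submodule.smul_mem _ _ hw1γ
          have hd0 : d = 0 := by
            rcases smul_eq_zero.mp t1 with h' | h'
            · exact h'
            · exact absurd h' hfa
          have hc0 : c = 0 := by
            rcases smul_eq_zero.mp t2 with h' | h'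
            · exact h'
            · exact absurd h' hfa
          apply hfb
          rw [show f' b0 = c • u + d • v from hcd.symm, hc0, hd0, zero_smul, zero_smul, add_zero]
        refine ⟨a0, b0, f a0, (α*d-β*c)⁻¹ • f' b0, hw0V, Submodule.smul_mem _ _ hw1V, hw0γ,
          Submodule.smul_mem _ _ hw1γ, hfa, ?_, ?_⟩
        · apply le_antisymm
          · rw [Submodule.span_le]
            rintro t ht
            simp only [Set.mem_insert_iff, Set.mem_singleton_iff] at ht
            rcases ht with rfl | rfl
            · exact hw0V
            · exact Submodule.smul_mem _ _ hw1V
          · rw [Submodule.span_le]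
            rintro t ht
            simp only [Set.mem_insert_iff, Set.mem_singleton_iff] at ht
            rcases ht with rfl | rfl
            · rw [SetLike.mem_coe, Submodule.mem_span_pair]
              refine ⟨(α*d-β*c)⁻¹ * d, -β, ?_⟩
              have expand : ((α*d-β*c)⁻¹ * d) • f a0 + (-β) • ((α*d-β*c)⁻¹ • f' b0)
                  = (α*d-β*c)⁻¹ • (d • f a0 - β • f' b0) := by module
              rw [expand, E1, smul_smul, inv_mul_cancel₀ hlam, one_smul]
            · rw [SetLike.mem_coe, Submodule.mem_span_pair]
              refine ⟨-((α*d-β*c)⁻¹ * c), α, ?_⟩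
              have expand : (-((α*d-β*c)⁻¹ * c)) • f a0 + α • ((α*d-β*c)⁻¹ • f' b0)
                  = (α*d-β*c)⁻¹ • (α • f' b0 - c • f a0) := by module
              rw [expand, E2, smul_smul, inv_mul_cancel₀ hlam, one_smul]
        · have hv'c : (((α*d-β*c)⁻¹ * c) • u + ((α*d-β*c)⁻¹ * d) • v) = (α*d-β*c)⁻¹ • f' b0 := by
            rw [← hcd]; module
          rw [← hαβ, ← hv'c, key]
          rw [show α * ((α*d-β*c)⁻¹ * d) - β * ((α*d-β*c)⁻¹ * c)
              = (α*d-β*c)⁻¹ * (α*d-β*c) from by ring, inv_mul_cancel₀ hlam, one_smul]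
    obtain ⟨g0, b0, u', v', hu'V, hv'V, hu'g, hv'b, hu'0, hspanUV, hI1⟩ := step
    have hbg : b0 = -g0 := by
      have h3 : mul u' (mul v' u') ∈ γ (g0 + (b0 + g0)) :=
        hmul _ _ u' hu'g _ (hmul _ _ v' hv'b u' hu'g)
      rw [hI1] at h3
      have h4 := huniq u' g0 (g0 + (b0 + g0)) hu'0 hu'g h3
      have h5 : g0 + 0 = g0 + (b0 + g0) := by rw [add_zero]; exact h4
      exact eq_neg_of_add_eq_zero_left (add_left_cancel h5).symm
    subst hbg
    have hE1 : mul v' u' ∈ γ 0 := by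
      have := hmul _ _ v' hv'b u' hu'g
      rwa [neg_add_cancel] at this
    have hE2 : -(mul u' v') ∈ γ 0 := by
      have := hmul _ _ u' hu'g v' hv'b
      rw [add_neg_cancel] at this
      exact neg_mem this
    have hX : -(mul u' u') ∈ γ (g0 + g0) := neg_mem (hmul _ _ u' hu'g u' hu'g)
    have hY : mul v' v' ∈ γ (-(g0 + g0)) := by
      have := hmul _ _ v' hv'b v' hv'b
      rwa [← neg_add] at this
    have prodmem : ∀ p q : S, p ∈ Submodule.span F ({u', v'} : Set S) →
        q ∈ Submodule.span F ({u', v'} : Set S) →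
        mul p q ∈ Submodule.span F
          ({mul v' u', -(mul u' v'), -(mul u' u'), mul v' v', u', v'} : Set S) := by
      intro p q hp hq
      obtain ⟨c₁, c₂, rfl⟩ := Submodule.mem_span_pair.mp hp
      obtain ⟨d₁, d₂, rfl⟩ := Submodule.mem_span_pair.mp hq
      have expand : mul (c₁•u'+c₂•v') (d₁•u'+d₂•v') =
          (c₁*d₁) • (mul u' u') + ((c₁*d₂) • (mul u' v') +
          ((c₂*d₁) • (mul v' u') + (c₂*d₂) • (mul v' v'))) := by
        simp only [map_add, map_smul, LinearMap.add_apply, LinearMap.smul_apply, smul_smul]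
        module
      rw [expand]
      refine add_mem ?_ (add_mem ?_ (add_mem ?_ ?_)) <;> refine Submodule.smul_mem _ _ ?_
      · rw [show mul u' u' = -(-(mul u' u')) from (neg_neg _).symm]
        exact neg_mem (Submodule.subset_span (by simp))
      · rw [show mul u' v' = -(-(mul u' v')) from (neg_neg _).symm]
        exact neg_mem (Submodule.subset_span (by simp))
      · exact Submodule.subset_span (by simp)
      · exact Submodule.subset_span (by simp)
    have hu'' : u ∈ Submodule.span F ({u', v'} : Set S) := by rw [hspanUV]; exact huV
    have hv'' : v ∈ Submodule.span F ({u', v'} : Set S) := by rw [hspanUV]; exact hvV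
    have hsix : Submodule.span F
        ({mul v' u', -(mul u' v'), -(mul u' u'), mul v' v', u', v'} : Set S) = ⊤ := by
      rw [eq_top_iff, ← hspan, Submodule.span_le]
      have hsub : Submodule.span F ({u', v'} : Set S) ≤ Submodule.span F
          ({mul v' u', -(mul u' v'), -(mul u' u'), mul v' v', u', v'} : Set S) :=
        Submodule.span_mono (by intro t ht; simp only [Set.mem_insert_iff,
          Set.mem_singleton_iff] at ht ⊢; tauto)
      rintro t ht
      simp only [Set.mem_insert_iff, Set.mem_singleton_iff] at ht
      rcases ht with h' | h' | h' | h' | h' | h' <;> rw [h']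
      · rw [← s3]; exact prodmem v u hv'' hu''
      · rw [show e₂ = -(mul u v) from by rw [s2, neg_neg]]
        exact neg_mem (prodmem u v hu'' hv'')
      · rw [show x = -(mul u u) from by rw [s1, neg_neg]]
        exact neg_mem (prodmem u u hu'' hu'')
      · rw [← s4]; exact prodmem v v hv'' hv''
      · exact hsub hu''
      · exact hsub hv''
    have hle : ∀ k, GammaB42 (mul v' u') (-(mul u' v')) (-(mul u' u')) (mul v' v') u' v' g0 k
        ≤ γ k := by
      intro k
      simp only [GammaB42]
      refine sup_le (sup_le (sup_le (sup_le ?_ ?_) ?_) ?_) ?_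
      · split_ifs with hk
        · subst hk
          rw [Submodule.span_le]
          rintro t ht
          simp only [Set.mem_insert_iff, Set.mem_singleton_iff] at ht
          rcases ht with rfl | rfl
          · exact hE1
          · exact hE2
        · exact bot_le
      · split_ifs with hk
        · subst hk; rw [Submodule.span_singleton_le_iff_mem]; exact hu'g
        · exact bot_le
      · split_ifs with hk
        · subst hk; rw [Submodule.span_singleton_le_iff_mem]; exact hv'b
        · exact bot_le
      · split_ifs with hk
        · subst hk; rw [Submodule.span_singleton_le_iff_mem]; exact hX
        · exact bot_le
      · split_ifs with hk
        · subst hk; rw [Submodule.span_singleton_le_iff_mem]; exact hY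
        · exact bot_le
    have hsup : ⨆ k, GammaB42 (F := F) (mul v' u') (-(mul u' v')) (-(mul u' u')) (mul v' v') u' v' g0 k
        = (⊤ : Submodule F S) := by
      rw [eq_top_iff, ← hsix, Submodule.span_le]
      have hmem : ∀ (k : G) (w : S),
          w ∈ GammaB42 (F := F) (mul v' u') (-(mul u' v')) (-(mul u' u')) (mul v' v') u' v' g0 k →
          w ∈ ⨆ k, GammaB42 (F := F) (mul v' u') (-(mul u' v')) (-(mul u' u')) (mul v' v') u' v' g0 k :=
        fun k w hw => Submodule.mem_iSup_of_mem k hw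
      rintro t ht
      simp only [Set.mem_insert_iff, Set.mem_singleton_iff] at ht
      rcases ht with rfl | rfl | rfl | rfl | rfl | rfl
      · refine hmem 0 _ ?_
        simp only [GammaB42]
        refine Submodule.mem_sup_left (Submodule.mem_sup_left
          (Submodule.mem_sup_left (Submodule.mem_sup_left ?_)))
        rw [if_pos trivial]; exact Submodule.subset_span (by simp)
      · refine hmem 0 _ ?_
        simp only [GammaB42]
        refine Submodule.mem_sup_left (Submodule.mem_sup_left
          (Submodule.mem_sup_left (Submodule.mem_sup_left ?_)))
        rw [if_pos trivial]; exact Submodule.subset_span (by simp)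
      · refine hmem (g0 + g0) _ ?_
        simp only [GammaB42]
        refine Submodule.mem_sup_left (Submodule.mem_sup_right ?_)
        rw [if_pos trivial]; exact Submodule.subset_span (by simp)
      · refine hmem (-(g0 + g0)) _ ?_
        simp only [GammaB42]
        refine Submodule.mem_sup_right ?_
        rw [if_pos trivial]; exact Submodule.subset_span (by simp)
      · refine hmem g0 _ ?_
        simp only [GammaB42]
        refine Submodule.mem_sup_left (Submodule.mem_sup_left
          (Submodule.mem_sup_left (Submodule.mem_sup_right ?_)))
        rw [if_pos trivial]; exact Submodule.subset_span (by simp)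
      · refine hmem (-g0) _ ?_
        simp only [GammaB42]
        refine Submodule.mem_sup_left (Submodule.mem_sup_left (Submodule.mem_sup_right ?_))
        rw [if_pos trivial]; exact Submodule.subset_span (by simp)
    exact ⟨g0, u', v', hu'V, hv'V, hspanUV, hI1,
      fun k => aux_grading_eq γ _ hind hle hsup k⟩
  · -- Part 2: isomorphism classification
    intro g h
    constructor
    · rintro ⟨φ, hφmul, hφB, hφV, hφΓ⟩
      by_contra hcon
      push_neg at hcon
      obtain ⟨hgh, hgnh⟩ := hcon
      have hu1 : u ∈ GammaB42 (F := F) e₁ e₂ x y u v g g := by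
        simp only [GammaB42]
        refine Submodule.mem_sup_left (Submodule.mem_sup_left
          (Submodule.mem_sup_left (Submodule.mem_sup_right ?_)))
        rw [if_pos trivial]; exact Submodule.subset_span (by simp)
      have h2 : φ u ∈ GammaB42 (F := F) e₁ e₂ x y u v h g := by
        rw [← hφΓ g]; exact Submodule.mem_map_of_mem hu1
      have h3 : φ u ∈ Submodule.span F ({u, v} : Set S) := by
        rw [← hφV]; exact Submodule.mem_map_of_mem huV
      have h4 : GammaB42 (F := F) e₁ e₂ x y u v h g ≤ Submodule.span F ({e₁, e₂, x, y} : Set S) := by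
        simp only [GammaB42]
        refine sup_le (sup_le (sup_le (sup_le ?_ ?_) ?_) ?_) ?_
        · split_ifs
          · exact Submodule.span_mono (by intro t ht; simp only [Set.mem_insert_iff,
              Set.mem_singleton_iff] at ht ⊢; tauto)
          · exact bot_le
        · rw [if_neg hgh]; exact bot_le
        · rw [if_neg hgnh]; exact bot_le
        · split_ifs
          · exact Submodule.span_mono (by intro t ht; simp only [Set.mem_insert_iff,
              Set.mem_singleton_iff] at ht ⊢; tauto)
          · exact bot_le
        · split_ifs
          · exact Submodule.span_mono (by intro t ht; simp only [Set.mem_insert_iff,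
              Set.mem_singleton_iff] at ht ⊢; tauto)
          · exact bot_le
      have h5 : φ u = 0 := Submodule.disjoint_def.mp hdisjBV _ (h4 h2) h3
      exact hu0 (φ.map_eq_zero_iff.mp h5)
    · rintro (rfl | rfl)
      · refine ⟨LinearEquiv.refl F S, by simp, ?_, ?_, fun k => ?_⟩ <;>
          simp [Submodule.map_id]
      · -- g = -h : use the symplectic basis change u ↦ v, v ↦ -u
        have hrange : Set.range ![e₁, e₂, x, y, u, v] = {e₁, e₂, x, y, u, v} := by
          simp only [Matrix.range_cons, Matrix.range_empty, Set.singleton_union,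
            Set.union_empty]
        let b : Module.Basis (Fin 6) F S := Module.Basis.mk hbasis (by rw [hrange, hspan])
        have hb : ∀ i : Fin 6, b i = ![e₁, e₂, x, y, u, v] i := fun i => Module.Basis.mk_apply _ _ _
        let φL : S →ₗ[F] S := b.constr F ![e₂, e₁, -y, -x, v, -u]
        let ψL : S →ₗ[F] S := b.constr F ![e₂, e₁, -y, -x, -v, u]
        have hφv : ∀ i : Fin 6, φL (![e₁, e₂, x, y, u, v] i) = ![e₂, e₁, -y, -x, v, -u] i :=
          fun i => by rw [← hb i]; exact b.constr_basis F _ i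
        have hψv : ∀ i : Fin 6, ψL (![e₁, e₂, x, y, u, v] i) = ![e₂, e₁, -y, -x, -v, u] i :=
          fun i => by rw [← hb i]; exact b.constr_basis F _ i
        have f1 : φL e₁ = e₂ := hφv 0
        have f2 : φL e₂ = e₁ := hφv 1
        have f3 : φL x = -y := hφv 2
        have f4 : φL y = -x := hφv 3
        have f5 : φL u = v := hφv 4
        have f6 : φL v = -u := hφv 5
        have g1 : ψL e₁ = e₂ := hψv 0
        have g2 : ψL e₂ = e₁ := hψv 1
        have g3 : ψL x = -y := hψv 2
        have g4 : ψL y = -x := hψv 3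
        have g5 : ψL u = -v := hψv 4
        have g6 : ψL v = u := hψv 5
        have hc1 : φL ∘ₗ ψL = LinearMap.id := by
          apply b.ext; intro i
          simp only [hb, LinearMap.comp_apply, LinearMap.id_apply]
          revert i
          simp only [Fin.forall_fin_succ, IsEmpty.forall_iff, Matrix.cons_val_zero,
            Matrix.cons_val_succ, and_true]
          refine ⟨?_, ?_, ?_, ?_, ?_, ?_⟩ <;>
            simp [f1, f2, f3, f4, f5, f6, g1, g2, g3, g4, g5, g6, map_neg]
        have hc2 : ψL ∘ₗ φL = LinearMap.id := by
          apply b.ext; intro i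
          simp only [hb, LinearMap.comp_apply, LinearMap.id_apply]
          revert i
          simp only [Fin.forall_fin_succ, IsEmpty.forall_iff, Matrix.cons_val_zero,
            Matrix.cons_val_succ, and_true]
          refine ⟨?_, ?_, ?_, ?_, ?_, ?_⟩ <;>
            simp [f1, f2, f3, f4, f5, f6, g1, g2, g3, g4, g5, g6, map_neg]
        have P36 : ∀ i j : Fin 6,
            φL (mul (![e₁, e₂, x, y, u, v] i) (![e₁, e₂, x, y, u, v] j)) =
            mul (φL (![e₁, e₂, x, y, u, v] i)) (φL (![e₁, e₂, x, y, u, v] j)) := by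
          simp only [Fin.forall_fin_succ, IsEmpty.forall_iff, Matrix.cons_val_zero,
            Matrix.cons_val_succ, and_true]
          simp only [f1, f2, f3, f4, f5, f6, map_neg, map_zero, LinearMap.neg_apply, neg_neg,
            p1,p2,p3,p4,p5,p6,p7,p8,p9,p10,p11,p12,p13,p14,p15,p16,
            q1,q2,q3,q4,q5,q6,q7,q8, r1,r2,r3,r4,r5,r6,r7,r8, s1,s2,s3,s4]
          norm_num
        have hmull : ∀ a c : S, φL (mul a c) = mul (φL a) (φL c) := by
          have keyb : LinearMap.compr₂ mul φL = (mul.compl₂ φL).comp φL := by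
            apply b.ext; intro i
            apply b.ext; intro j
            simp only [hb, LinearMap.compr₂_apply, LinearMap.compl₂_apply,
              LinearMap.comp_apply]
            exact P36 i j
          intro a c
          exact LinearMap.congr_fun (LinearMap.congr_fun keyb a) c
        have hmapB : Submodule.map φL (Submodule.span F ({e₁, e₂, x, y} : Set S)) =
            Submodule.span F ({e₁, e₂, x, y} : Set S) := by
          rw [Submodule.map_span]
          apply le_antisymm
          · rw [Submodule.span_le]
            rintro t ⟨s', hs', rfl⟩
            simp only [Set.mem_insert_iff, Set.mem_singleton_iff] at hs'
            rcases hs' with rfl | rfl | rfl | rfl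
            · rw [f1]; exact Submodule.subset_span (by simp)
            · rw [f2]; exact Submodule.subset_span (by simp)
            · rw [f3]; exact neg_mem (Submodule.subset_span (by simp))
            · rw [f4]; exact neg_mem (Submodule.subset_span (by simp))
          · rw [Submodule.span_le]
            rintro t ht
            simp only [Set.mem_insert_iff, Set.mem_singleton_iff] at ht
            rcases ht with h' | h' | h' | h' <;> rw [h']
            · rw [show e₁ = φL e₂ from f2.symm]
              exact Submodule.subset_span ⟨e₂, by simp, rfl⟩
            · rw [show e₂ = φL e₁ from f1.symm]
              exact Submodule.subset_span ⟨e₁, by simp, rfl⟩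
            · rw [show x = -(φL y) from by rw [f4, neg_neg]]
              exact neg_mem (Submodule.subset_span ⟨y, by simp, rfl⟩)
            · rw [show y = -(φL x) from by rw [f3, neg_neg]]
              exact neg_mem (Submodule.subset_span ⟨x, by simp, rfl⟩)
        have hmapV : Submodule.map φL (Submodule.span F ({u, v} : Set S)) =
            Submodule.span F ({u, v} : Set S) := by
          rw [Submodule.map_span]
          apply le_antisymm
          · rw [Submodule.span_le]
            rintro t ⟨s', hs', rfl⟩
            simp only [Set.mem_insert_iff, Set.mem_singleton_iff] at hs'
            rcases hs' with rfl | rfl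
            · rw [f5]; exact Submodule.subset_span (by simp)
            · rw [f6]; exact neg_mem (Submodule.subset_span (by simp))
          · rw [Submodule.span_le]
            rintro t ht
            simp only [Set.mem_insert_iff, Set.mem_singleton_iff] at ht
            rcases ht with h' | h' <;> rw [h']
            · rw [show u = -(φL v) from by rw [f6, neg_neg]]
              exact neg_mem (Submodule.subset_span ⟨v, by simp, rfl⟩)
            · rw [show v = φL u from f5.symm]
              exact Submodule.subset_span ⟨u, by simp, rfl⟩
        have hmapΓ : ∀ k, Submodule.map φL (GammaB42 e₁ e₂ x y u v (-h) k) =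
            GammaB42 e₁ e₂ x y u v h k := by
          intro k
          have m1 : Submodule.map φL (Submodule.span F ({e₁, e₂} : Set S)) =
              Submodule.span F ({e₁, e₂} : Set S) := by
            rw [Submodule.map_span, Set.image_insert_eq, Set.image_singleton, f1, f2,
              Set.pair_comm]
          have m2 : Submodule.map φL (Submodule.span F ({u} : Set S)) =
              Submodule.span F ({v} : Set S) := by
            rw [Submodule.map_span, Set.image_singleton, f5]
          have m3 : Submodule.map φL (Submodule.span F ({v} : Set S)) =
              Submodule.span F ({u} : Set S) := by
            rw [Submodule.map_span, Set.image_singleton, f6, ← Set.neg_singleton,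
              Submodule.span_neg]
          have m4 : Submodule.map φL (Submodule.span F ({x} : Set S)) =
              Submodule.span F ({y} : Set S) := by
            rw [Submodule.map_span, Set.image_singleton, f3, ← Set.neg_singleton,
              Submodule.span_neg]
          have m5 : Submodule.map φL (Submodule.span F ({y} : Set S)) =
              Submodule.span F ({x} : Set S) := by
            rw [Submodule.map_span, Set.image_singleton, f4, ← Set.neg_singleton,
              Submodule.span_neg]
          simp only [GammaB42, Submodule.map_sup, apply_ite (Submodule.map φL),
            Submodule.map_bot, m1, m2, m3, m4, m5, neg_neg, neg_add]
          simp only [sup_assoc, sup_comm, sup_left_comm]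
        exact ⟨LinearEquiv.ofLinear φL ψL hc1 hc2, hmull, hmapB, hmapV, hmapΓ⟩
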